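/- For a balanced game, every forward orbit of the cohesion flow converges to the core: for each x ∈ X, the solution γ_x of γ' = φ(γ), γ(0) = x, satisfies dist(γ_x(t), C(v)) → 0 as t → ∞. -/

import Mathlib

open Finset
open scoped RealInnerProductSpace

noncomputable section
variable {N : Type*} [Fintype N] [DecidableEq N]

/-- Indicator vector of a coalition. -/
def indic (S : Finset N) : EuclideanSpace ℝ N := WithLp.toLp 2 (fun i => if i ∈ S then (1:ℝ) else 0)

/-- η^S = 1^S - (s/n)·1^N. -/
def eta (S : Finset N) : EuclideanSpace ℝ N :=
  WithLp.toLp 2 (fun i => (if i ∈ S then (1:ℝ) else 0) - (S.card : ℝ) / (Fintype.card N))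

/-- Excess e_S(x) = v(S) - x(S). -/
def excess (v : Finset N → ℝ) (S : Finset N) (x : EuclideanSpace ℝ N) : ℝ :=
  v S - ∑ i ∈ S, x i

/-- Dissatisfaction field ϑ. -/
def dissat (v : Finset N → ℝ) (x : EuclideanSpace ℝ N) : ℝ :=
  (1/2) * ∑ S ∈ univ.filter (· ≠ (∅ : Finset N)), (max 0 (excess v S x))^2

/-- Cohesion field φ. -/
def phi (v : Finset N → ℝ) (x : EuclideanSpace ℝ N) : EuclideanSpace ℝ N :=
  ∑ S ∈ univ.filter (· ≠ (∅ : Finset N)), max 0 (excess v S x) • eta S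

/-- The core. -/
def core (v : Finset N → ℝ) : Set (EuclideanSpace ℝ N) :=
  {x | (∑ i, x i) = 0 ∧ ∀ S : Finset N, S.Nonempty → excess v S x ≤ 0}

/-- A balanced collection of (nonempty) coalitions. -/
def IsBalancedColl (B : Finset (Finset N)) : Prop :=
  (∀ S ∈ B, S.Nonempty) ∧
    ∃ lam : Finset N → ℝ, (∀ S ∈ B, 0 < lam S) ∧
      ∑ S ∈ B, lam S • indic S = indic (univ : Finset N)

/-- Outvoting relation. -/
def Outvotes (v : Finset N → ℝ) (x y : EuclideanSpace ℝ N) : Prop :=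
  ∃ S : Finset N, S.Nonempty ∧ 0 ≤ excess v S x ∧ (∀ i ∈ S, y i < x i) ∧
    ∀ T : Finset N, T.Nonempty → ¬ T ⊆ S → v T ≤ ∑ i ∈ T, x i


lemma inner_eta (y : EuclideanSpace ℝ N) (hy : ∑ i, y i = 0) (S : Finset N) :
    ⟪y, eta S⟫ = ∑ i ∈ S, y i := by
  simp only [PiLp.inner_apply, RCLike.inner_apply, conj_trivial, eta, PiLp.toLp_apply]
  have h : ∀ i, y i * ((if i ∈ S then (1:ℝ) else 0) - (S.card : ℝ) / (Fintype.card N))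
      = (if i ∈ S then y i else 0) - y i * ((S.card : ℝ) / (Fintype.card N)) := by
    intro i; split <;> ring
  rw [Finset.sum_congr rfl (fun i _ => mul_comm _ (y.ofLp i))]
  simp only [h, Finset.sum_sub_distrib, Finset.sum_ite_mem, Finset.univ_inter,
    ← Finset.sum_mul, hy, zero_mul, sub_zero]

lemma dissat_nonneg (v : Finset N → ℝ) (x : EuclideanSpace ℝ N) : 0 ≤ dissat v x := by
  unfold dissat
  positivity

lemma key (v : Finset N → ℝ) (x z : EuclideanSpace ℝ N) (hx : ∑ i, x i = 0)
    (hz : z ∈ core v) : ⟪x - z, phi v x⟫ ≤ -(2 * dissat v x) := by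
  have hxz : ∑ i, (x - z) i = 0 := by
    simp only [PiLp.sub_apply, Finset.sum_sub_distrib, hx, hz.1, sub_zero]
  rw [phi, inner_sum]
  have hb : ∀ S ∈ univ.filter (· ≠ (∅ : Finset N)),
      ⟪x - z, max 0 (excess v S x) • eta S⟫ ≤ -(max 0 (excess v S x))^2 := by
    intro S hS
    have hSne : S.Nonempty := by
      simp only [Finset.mem_filter] at hS
      exact Finset.nonempty_iff_ne_empty.2 hS.2
    rw [real_inner_smul_right, inner_eta _ hxz]
    have h1 : ∑ i ∈ S, (x - z) i = excess v S z - excess v S x := by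
      simp only [PiLp.sub_apply, Finset.sum_sub_distrib, excess]; ring
    rw [h1]
    have h2 : excess v S z ≤ 0 := hz.2 S hSne
    have h3 : max 0 (excess v S x) * excess v S x = (max 0 (excess v S x))^2 := by
      rcases le_or_gt (excess v S x) 0 with h | h
      · rw [max_eq_left h]; ring
      · rw [max_eq_right h.le]; ring
    have h4 : 0 ≤ max 0 (excess v S x) := le_max_left _ _
    nlinarith
  calc ∑ S ∈ univ.filter (· ≠ (∅ : Finset N)), ⟪x - z, max 0 (excess v S x) • eta S⟫
      ≤ ∑ S ∈ univ.filter (· ≠ (∅ : Finset N)), -(max 0 (excess v S x))^2 :=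
        Finset.sum_le_sum hb
    _ = -(2 * dissat v x) := by rw [dissat]; rw [Finset.sum_neg_distrib]; ring

lemma mem_core_of_dissat (v : Finset N → ℝ) (x : EuclideanSpace ℝ N)
    (hx : ∑ i, x i = 0) (h : dissat v x = 0) : x ∈ core v := by
  refine ⟨hx, fun S hS => ?_⟩
  have hsum : ∑ S ∈ univ.filter (· ≠ (∅ : Finset N)), (max 0 (excess v S x))^2 = 0 := by
    unfold dissat at h; linarith
  have hterm : (max 0 (excess v S x))^2 = 0 := by
    have := (Finset.sum_eq_zero_iff_of_nonneg (fun S _ => sq_nonneg _)).1 hsum S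
      (by simp [Finset.mem_filter, Finset.nonempty_iff_ne_empty.1 hS])
    exact this
  have : max 0 (excess v S x) = 0 := by
    nlinarith [le_max_left (0:ℝ) (excess v S x)]
  by_contra hc
  push_neg at hc
  rw [max_eq_right hc.le] at this
  linarith

lemma dissat_continuous (v : Finset N → ℝ) : Continuous (dissat (N := N) v) := by
  unfold dissat excess
  refine continuous_const.mul (continuous_finset_sum _ fun S _ => ?_)
  exact ((continuous_const.max (continuous_const.sub
    (continuous_finset_sum _ fun i _ => (PiLp.continuous_apply 2 _ i)))).pow 2)

theorem stmt_18 [Nonempty N] (v : Finset N → ℝ) (hv : v univ = 0)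
    (hbal : (core v).Nonempty) (x : EuclideanSpace ℝ N) (hx : (∑ i, x i) = 0)
    (γ : ℝ → EuclideanSpace ℝ N) (hγX : ∀ t, (∑ i, γ t i) = 0)
    (h0 : γ 0 = x) (hγ : ∀ t, HasDerivAt γ (phi v (γ t)) t) :
    Filter.Tendsto (fun t => Metric.infDist (γ t) (core v)) Filter.atTop (nhds 0) := by
  -- squared distance to a core point, and its derivative
  set d : ℝ → ℝ := fun t => Metric.infDist (γ t) (core v) with hd
  have hg : ∀ (z' : EuclideanSpace ℝ N) (t : ℝ),
      HasDerivAt (fun t => ⟪γ t - z', γ t - z'⟫) (2 * ⟪γ t - z', phi v (γ t)⟫) t := by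
    intro z' t
    have h := HasDerivAt.inner ℝ ((hγ t).sub_const z') ((hγ t).sub_const z')
    rw [show ⟪γ t - z', phi v (γ t)⟫ + ⟪phi v (γ t), γ t - z'⟫
        = 2 * ⟪γ t - z', phi v (γ t)⟫ by rw [real_inner_comm (phi v (γ t))]; ring] at h
    exact h
  -- derivative is ≤ -4 dissat ≤ 0 for core points
  have hderiv_le : ∀ z' ∈ core v, ∀ t : ℝ,
      2 * ⟪γ t - z', phi v (γ t)⟫ ≤ -(4 * dissat v (γ t)) := by
    intro z' hz' t
    have := key v (γ t) z' (hγX t) hz'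
    linarith
  -- norm distance to each core point is antitone
  have hA : ∀ z' ∈ core v, ∀ s t : ℝ, s ≤ t → ‖γ t - z'‖ ≤ ‖γ s - z'‖ := by
    intro z' hz' s t hst
    have hanti : Antitone (fun t => ⟪γ t - z', γ t - z'⟫) := by
      refine antitone_of_deriv_nonpos (fun t => (hg z' t).differentiableAt) (fun t => ?_)
      rw [(hg z' t).deriv]
      have := hderiv_le z' hz' t
      have := dissat_nonneg v (γ t)
      linarith
    have h2 : ⟪γ t - z', γ t - z'⟫ ≤ ⟪γ s - z', γ s - z'⟫ := hanti hst
    rw [real_inner_self_eq_norm_sq, real_inner_self_eq_norm_sq] at h2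
    nlinarith [norm_nonneg (γ t - z'), norm_nonneg (γ s - z')]
  -- infDist is antitone
  have hdanti : Antitone d := by
    intro s t hst
    by_contra hc
    push_neg at hc
    obtain ⟨z', hz', hlt⟩ := (Metric.infDist_lt_iff hbal).1 hc
    have h1 : d t ≤ dist (γ t) z' := Metric.infDist_le_dist_of_mem hz'
    have h2 : dist (γ t) z' ≤ dist (γ s) z' := by
      rw [dist_eq_norm, dist_eq_norm]; exact hA z' hz' s t hst
    linarith
  have hdnonneg : ∀ t, 0 ≤ d t := fun t => Metric.infDist_nonneg
  have hbdd : BddBelow (Set.range d) := ⟨0, by rintro _ ⟨t, rfl⟩; exact hdnonneg t⟩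
  have htend : Filter.Tendsto d Filter.atTop (nhds (⨅ t, d t)) :=
    tendsto_atTop_ciInf hdanti hbdd
  set ℓ := ⨅ t, d t with hℓ
  have hℓ0 : 0 ≤ ℓ := le_ciInf hdnonneg
  have hℓle : ∀ t, ℓ ≤ d t := fun t => ciInf_le hbdd t
  rcases eq_or_lt_of_le hℓ0 with h | hpos
  · rwa [← h] at htend
  -- contradiction from ℓ > 0
  exfalso
  obtain ⟨z, hz⟩ := hbal
  set R := ‖x - z‖ with hR
  set K : Set (EuclideanSpace ℝ N) :=
    {y | (∑ i, y i) = 0} ∩ Metric.closedBall z R ∩ {y | ℓ ≤ Metric.infDist y (core v)} with hK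
  have hKclosed : IsClosed K := by
    refine ((IsClosed.inter ?_ Metric.isClosed_closedBall).inter ?_)
    · exact isClosed_eq (continuous_finset_sum _ fun i _ => (PiLp.continuous_apply 2 _ i)) continuous_const
    · exact isClosed_le continuous_const (Metric.continuous_infDist_pt _)
  have hKcompact : IsCompact K := by
    refine Metric.isCompact_of_isClosed_isBounded hKclosed ?_
    exact (Metric.isBounded_closedBall).subset (fun y hy => hy.1.2)
  have hγK : ∀ t : ℝ, 0 ≤ t → γ t ∈ K := by
    intro t ht
    refine ⟨⟨hγX t, ?_⟩, hℓle t⟩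
    rw [Metric.mem_closedBall, dist_eq_norm]
    calc ‖γ t - z‖ ≤ ‖γ 0 - z‖ := hA z hz 0 t ht
      _ = R := by rw [h0]
  have hKne : K.Nonempty := ⟨γ 0, hγK 0 le_rfl⟩
  obtain ⟨y₀, hy₀K, hy₀min⟩ := hKcompact.exists_isMinOn hKne (dissat_continuous v).continuousOn
  set δ := dissat v y₀ with hδ
  have hδpos : 0 < δ := by
    rcases (dissat_nonneg v y₀).lt_or_eq with h | h
    · exact h
    · exfalso
      have hy₀core : y₀ ∈ core v := mem_core_of_dissat v y₀ hy₀K.1.1 h.symm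
      have : Metric.infDist y₀ (core v) = 0 := Metric.infDist_zero_of_mem hy₀core
      have := hy₀K.2
      simp only [Set.mem_setOf_eq] at this
      linarith
  -- G decreasing on [0, ∞)
  set G : ℝ → ℝ := fun t => ⟪γ t - z, γ t - z⟫ + (4 * δ) * t with hG
  have hGderiv : ∀ t, HasDerivAt G (2 * ⟪γ t - z, phi v (γ t)⟫ + 4 * δ) t := by
    intro t
    have h2 : HasDerivAt (fun s : ℝ => (4 * δ) * s) (4 * δ) t := by
      simpa using (hasDerivAt_id t).const_mul (4 * δ)
    exact (hg z t).add h2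
  have hGanti : AntitoneOn G (Set.Ici 0) := by
    refine antitoneOn_of_deriv_nonpos (convex_Ici 0) ?_ ?_ ?_
    · exact Continuous.continuousOn (by
        exact continuous_iff_continuousAt.2 fun t => (hGderiv t).continuousAt)
    · intro t ht
      exact ((hGderiv t).differentiableAt).differentiableWithinAt
    · intro t ht
      rw [interior_Ici] at ht
      rw [(hGderiv t).deriv]
      have h1 := hderiv_le z hz t
      have h2 : δ ≤ dissat v (γ t) := isMinOn_iff.1 hy₀min (γ t) (hγK t ht.le)
      linarith
  -- contradiction: G eventually negative but inner self nonneg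
  set T := (⟪x - z, x - z⟫ + 1) / (4 * δ) with hT
  have hTpos : 0 < T := by
    have h1 : 0 ≤ ⟪x - z, x - z⟫ := real_inner_self_nonneg
    have : 0 < ⟪x - z, x - z⟫ + 1 := by linarith
    positivity
  have h1 : G T ≤ G 0 := hGanti (Set.mem_Ici.2 le_rfl) (Set.mem_Ici.2 hTpos.le) hTpos.le
  have h2 : G 0 = ⟪x - z, x - z⟫ := by simp [hG, h0]
  have h3 : (4 * δ) * T = ⟪x - z, x - z⟫ + 1 := by
    rw [hT]; field_simp
  have h4 : 0 ≤ ⟪γ T - z, γ T - z⟫ := real_inner_self_nonneg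
  have : G T = ⟪γ T - z, γ T - z⟫ + (4 * δ) * T := rfl
  linarith

end
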